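/- Let H be a commutative graded connected Hopf algebra with preparation map components R^0 = 1⊗id and R^n = (-1)^n (μ_n ⊗ id) ∘ Δ^(n) for n ≥ 1. Then for all m, n ≥ 0, the composite (μ₃ ⊗ id) ∘ (R^m ⊗ R^n) ∘ Δ' equals -R^{m+n+1}, where μ₃: H^{⊗3} → H is triple multiplication applied to the first three factors of H^{⊗4}. -/

import Mathlib

set_option synthInstance.maxHeartbeats 1000000
set_option maxHeartbeats 1000000
set_option linter.unusedSectionVars false


open TensorProduct
open PiTensorProduct

variable (K : Type*) [Field K] [CharZero K]
variable (H : Type*) [CommRing H] [HopfAlgebra K H]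

/-- The reduced coproduct `Δ' = Δ - 1⊗id - id⊗1`. -/
noncomputable def redComul : H →ₗ[K] H ⊗[K] H :=
  Coalgebra.comul - TensorProduct.mk K H H 1 - (TensorProduct.mk K H H).flip 1

/-- `H ⊗ (⨂ⁿ H) ≃ ⨂ⁿ⁺¹ H`. -/
noncomputable def tpowSuccEquiv (n : ℕ) :
    (H ⊗[K] (⨂[K]^n H)) ≃ₗ[K] ⨂[K]^(n+1) H :=
  (TensorProduct.congr
      ((PiTensorProduct.subsingletonEquiv (0 : Fin 1)).symm) (LinearEquiv.refl K _)).trans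
  ((PiTensorProduct.tmulEquiv K H).trans
    (PiTensorProduct.reindex K (fun _ => H) ((finSumFinEquiv).trans (finCongr (by omega)))))

/-- The iterated reduced coproduct: `DIter 0 = id` (as a map `H → ⨂¹H`) and
`DIter (n+1) = (id ⊗ DIter n) ∘ Δ'`, so that for `n ≥ 1`, `DIter n = Δ^(n)`. -/
noncomputable def DIter : (n : ℕ) → (H →ₗ[K] ⨂[K]^(n+1) H)
  | 0 => ((PiTensorProduct.subsingletonEquiv (R := K) (s := fun _ : Fin 1 => H) (0 : Fin 1)).symm : H ≃ₗ[K] ⨂[K]^1 H).toLinearMap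
  | n+1 => (tpowSuccEquiv K H (n+1)).toLinearMap ∘ₗ
      (LinearMap.lTensor H (DIter n)) ∘ₗ redComul K H

/-- `n`-fold multiplication `μ_n : H^{⊗n} → H`. -/
noncomputable def muN (n : ℕ) : (⨂[K]^n H) →ₗ[K] H :=
  PiTensorProduct.lift (MultilinearMap.mkPiAlgebraFin K n H)

/-- Splitting off the last tensor factor, `⨂ⁿ⁺¹ H ≃ (⨂ⁿ H) ⊗ H`. -/
noncomputable def tpowSplitLast (n : ℕ) :
    (⨂[K]^(n+1) H) ≃ₗ[K] (⨂[K]^n H) ⊗[K] H :=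
  ((PiTensorProduct.reindex K (fun _ => H) ((finSumFinEquiv (m := n) (n := 1)).symm)).trans
    (PiTensorProduct.tmulEquiv K H).symm).trans
  (TensorProduct.congr (LinearEquiv.refl K _)
    (PiTensorProduct.subsingletonEquiv (0 : Fin 1)))

/-- `Sn n = (μ_n ⊗ id) ∘ Δ^(n) : H → H ⊗ H`; in Sweedler notation
`Sn n (x) = x⁽¹⁾⋯x⁽ⁿ⁾ ⊗ x⁽ⁿ⁺¹⁾`.  In particular `Sn 0 = 1 ⊗ id`. -/
noncomputable def Sn (n : ℕ) : H →ₗ[K] H ⊗[K] H :=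
  LinearMap.rTensor H (muN K H n) ∘ₗ (tpowSplitLast K H n).toLinearMap ∘ₗ DIter K H n

/-- The components `R^n = (-1)^n (μ_n ⊗ id) ∘ Δ^(n)` of the preparation map. -/
noncomputable def Rn (n : ℕ) : H →ₗ[K] H ⊗[K] H := ((-1 : K) ^ n) • Sn K H n

/-- `R` is the preparation map `R = 1⊗id + Σ_{n≥1} (-1)ⁿ (μ_n ⊗ id) ∘ Δ^(n)`:
on every element the sum terminates and `R` is given by the (finite) sum. -/
def IsPreparationMap (R : H →ₗ[K] H ⊗[K] H) : Prop :=
  (∀ x : H, ∃ N : ℕ, ∀ n, N ≤ n → Sn K H n x = 0) ∧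
  (∀ (x : H) (N : ℕ), (∀ n, N ≤ n → Sn K H n x = 0) →
    R x = ∑ n ∈ Finset.range N, Rn K H n x)
variable (𝒜 : ℕ → Submodule K H)

/-- The coproduct is compatible with the grading: `Δ(𝒜 n) ⊆ Σ_{p+q=n} 𝒜 p ⊗ 𝒜 q`. -/
def ComulGraded : Prop :=
  ∀ n : ℕ, ∀ x ∈ 𝒜 n,
    Coalgebra.comul (R := K) x ∈
      ⨆ pq : {pq : ℕ × ℕ // pq.1 + pq.2 = n},
        LinearMap.range (TensorProduct.map (𝒜 pq.1.1).subtype (𝒜 pq.1.2).subtype)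


/-- `μ₃ ⊗ id : H^{⊗4} → H^{⊗2}` multiplying the first three tensor factors together. -/
noncomputable def mu3TensorId : ((H ⊗[K] H) ⊗[K] (H ⊗[K] H)) →ₗ[K] H ⊗[K] H :=
  LinearMap.rTensor H
      (LinearMap.mul' K H ∘ₗ LinearMap.rTensor H (LinearMap.mul' K H)) ∘ₗ
    (TensorProduct.assoc K (H ⊗[K] H) H H).symm.toLinearMap


theorem h1 (t : H ⊗[K] H) :
    (TensorProduct.assoc K H H H) ((LinearMap.rTensor H (TensorProduct.mk K H H 1)) t)
      = 1 ⊗ₜ[K] t := by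
  induction t using TensorProduct.induction_on with
  | zero => simp
  | tmul a b => simp
  | add u v hu hv => simp [hu, hv, tmul_add]

theorem h2 (t : H ⊗[K] H) :
    (TensorProduct.assoc K H H H) ((LinearMap.rTensor H ((TensorProduct.mk K H H).flip 1)) t)
      = LinearMap.lTensor H (TensorProduct.mk K H H 1) t := by
  induction t using TensorProduct.induction_on with
  | zero => simp
  | tmul a b => simp
  | add u v hu hv => simp [hu, hv]

theorem h3 (t : H ⊗[K] H) (y : H) :
    (TensorProduct.assoc K H H H) (t ⊗ₜ[K] y)
      = LinearMap.lTensor H ((TensorProduct.mk K H H).flip y) t := by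
  induction t using TensorProduct.induction_on with
  | zero => simp
  | tmul a b => simp
  | add u v hu hv => simp [hu, hv, add_tmul]

theorem redComul_coassoc :
    (TensorProduct.assoc K H H H).toLinearMap ∘ₗ
      LinearMap.rTensor H (redComul K H) ∘ₗ redComul K H =
    LinearMap.lTensor H (redComul K H) ∘ₗ redComul K H := by
  ext x
  simp only [redComul, LinearMap.coe_comp, Function.comp_apply, LinearEquiv.coe_coe,
    LinearMap.sub_apply, LinearMap.rTensor_sub, LinearMap.lTensor_sub, map_sub,
    LinearMap.flip_apply, mk_apply]
  rw [Coalgebra.coassoc_apply (R := K) x]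
  simp only [LinearMap.rTensor_tmul, LinearMap.lTensor_tmul, mk_apply,
    Bialgebra.comul_one, Algebra.TensorProduct.one_def, h1, h2, h3]
  simp only [assoc_tmul, LinearMap.flip_apply, mk_apply, LinearMap.lTensor_tmul, Algebra.TensorProduct.one_def]
  abel


noncomputable def m2 : (H ⊗[K] (H ⊗[K] H)) →ₗ[K] H ⊗[K] H :=
  LinearMap.rTensor H (LinearMap.mul' K H) ∘ₗ (TensorProduct.assoc K H H H).symm.toLinearMap

theorem mu3_mk1 :
    mu3TensorId K H ∘ₗ LinearMap.rTensor (H ⊗[K] H) (TensorProduct.mk K H H 1) = m2 K H := by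
  ext x a b
  simp [mu3TensorId, m2]

theorem mu3_m2 :
    mu3TensorId K H ∘ₗ LinearMap.rTensor (H ⊗[K] H) (m2 K H) =
      m2 K H ∘ₗ LinearMap.lTensor H (mu3TensorId K H) ∘ₗ
        (TensorProduct.assoc K H (H ⊗[K] H) (H ⊗[K] H)).toLinearMap := by
  ext x a b c d
  simp [mu3TensorId, m2, mul_assoc]

theorem sn_zero : Sn K H 0 = TensorProduct.mk K H H 1 := by
  ext x
  simp [Sn, DIter, muN, tpowSplitLast, mk_apply]


theorem bridge (n : ℕ) :
    LinearMap.rTensor H (muN K H (n+1)) ∘ₗ (tpowSplitLast K H (n+1)).toLinearMap ∘ₗ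
      (tpowSuccEquiv K H (n+1)).toLinearMap
    = m2 K H ∘ₗ LinearMap.lTensor H
        (LinearMap.rTensor H (muN K H n) ∘ₗ (tpowSplitLast K H n).toLinearMap) := by
  ext x v
  simp only [TensorProduct.AlgebraTensorModule.curry_apply, TensorProduct.curry_apply,
    LinearMap.coe_restrictScalars, LinearMap.compMultilinearMap_apply, LinearMap.coe_comp,
    Function.comp_apply, LinearEquiv.coe_coe]
  rw [tpowSuccEquiv, tpowSplitLast, tpowSplitLast, muN, muN, m2]
  simp only [LinearEquiv.trans_apply, TensorProduct.congr_tmul, LinearEquiv.refl_apply,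
    PiTensorProduct.tmulEquiv_apply, PiTensorProduct.reindex_tprod,
    PiTensorProduct.subsingletonEquiv_symm_apply]
  simp only [PiTensorProduct.tmulEquiv_symm_apply, PiTensorProduct.reindex_tprod,
    TensorProduct.congr_tmul, LinearEquiv.refl_apply,
    LinearMap.rTensor_tmul, lift.tprod, MultilinearMap.mkPiAlgebraFin_apply,
    LinearMap.lTensor_tmul, LinearMap.coe_comp, Function.comp_apply, LinearEquiv.coe_coe,
    LinearEquiv.trans_apply, TensorProduct.assoc_symm_tmul, LinearMap.mul'_apply,
    Equiv.symm_symm, Equiv.trans_apply, finSumFinEquiv_apply_left, finSumFinEquiv_apply_right,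
    PiTensorProduct.subsingletonEquiv_apply_tprod]
  have hlast : (finSumFinEquiv.trans (finCongr (by omega : 1 + (n+1) = n+1+1))).symm
      (Fin.natAdd (n+1) (0 : Fin 1)) = Sum.inr (Fin.natAdd n (0 : Fin 1)) := by
    rw [Equiv.symm_apply_eq]
    simp [Fin.ext_iff]
  have hE0 : (finSumFinEquiv.trans (finCongr (by omega : 1 + (n+1) = n+1+1))).symm
      (Fin.castAdd 1 (0 : Fin (n+1))) = Sum.inl (0 : Fin 1) := by
    rw [Equiv.symm_apply_eq]
    simp [Fin.ext_iff]
  have hEs : ∀ i : Fin n, (finSumFinEquiv.trans (finCongr (by omega : 1 + (n+1) = n+1+1))).symm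
      (Fin.castAdd 1 (Fin.succ i)) = Sum.inr (Fin.castAdd 1 i) := by
    intro i
    rw [Equiv.symm_apply_eq]
    simp [Fin.ext_iff]
  rw [hlast]
  simp only [Sum.elim_inr]
  congr 1
  rw [List.ofFn_succ]
  simp only [hE0, hEs, Sum.elim_inl, Sum.elim_inr, List.prod_cons, Function.update_self]

theorem sn_succ (n : ℕ) :
    Sn K H (n + 1) = m2 K H ∘ₗ LinearMap.lTensor H (Sn K H n) ∘ₗ redComul K H := by
  have b := bridge K H n
  simp only [Sn, DIter, LinearMap.lTensor_comp, ← LinearMap.comp_assoc] at b ⊢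
  rw [b]

theorem key (m n : ℕ) :
    mu3TensorId K H ∘ₗ (TensorProduct.map (Sn K H m) (Sn K H n)) ∘ₗ redComul K H =
      Sn K H (m + n + 1) := by
  induction m with
  | zero =>
      rw [sn_zero, ← LinearMap.rTensor_comp_lTensor, sn_succ]
      simp only [← LinearMap.comp_assoc]
      rw [mu3_mk1]
      simp only [LinearMap.comp_assoc, Nat.zero_add]
  | succ m ih =>
      have assoc_nat :
          (TensorProduct.assoc K H (H ⊗[K] H) (H ⊗[K] H)).toLinearMap ∘ₗ
            LinearMap.rTensor (H ⊗[K] H) (LinearMap.lTensor H (Sn K H m)) ∘ₗ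
            LinearMap.lTensor (H ⊗[K] H) (Sn K H n) =
          LinearMap.lTensor H (TensorProduct.map (Sn K H m) (Sn K H n)) ∘ₗ
            (TensorProduct.assoc K H H H).toLinearMap := by
        rw [LinearMap.rTensor_comp_lTensor]
        have hmap : LinearMap.lTensor H (TensorProduct.map (Sn K H m) (Sn K H n)) =
            TensorProduct.map LinearMap.id (TensorProduct.map (Sn K H m) (Sn K H n)) := rfl
        have hmap2 : LinearMap.lTensor H (Sn K H m) =
            TensorProduct.map LinearMap.id (Sn K H m) := rfl
        rw [hmap, hmap2, ← TensorProduct.map_map_comp_assoc_eq]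
      have hsplit : TensorProduct.map
            (m2 K H ∘ₗ LinearMap.lTensor H (Sn K H m) ∘ₗ redComul K H) (Sn K H n) =
          LinearMap.rTensor (H ⊗[K] H) (m2 K H) ∘ₗ
            LinearMap.rTensor (H ⊗[K] H) (LinearMap.lTensor H (Sn K H m)) ∘ₗ
            LinearMap.lTensor (H ⊗[K] H) (Sn K H n) ∘ₗ
            LinearMap.rTensor H (redComul K H) := by
        rw [← LinearMap.rTensor_comp_lTensor, LinearMap.rTensor_comp, LinearMap.rTensor_comp,
          LinearMap.lTensor_comp_rTensor, ← LinearMap.rTensor_comp_lTensor,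
          LinearMap.comp_assoc, LinearMap.comp_assoc]
      apply LinearMap.ext; intro x
      simp only [LinearMap.coe_comp, Function.comp_apply]
      rw [show m + 1 + n + 1 = (m + n + 1) + 1 by omega, sn_succ, sn_succ]
      simp only [LinearMap.coe_comp, Function.comp_apply]
      rw [hsplit]
      simp only [LinearMap.coe_comp, Function.comp_apply]
      have e2 := LinearMap.congr_fun (mu3_m2 K H)
        (LinearMap.rTensor (H ⊗[K] H) (LinearMap.lTensor H (Sn K H m))
          ((LinearMap.lTensor (H ⊗[K] H) (Sn K H n))
            ((LinearMap.rTensor H (redComul K H)) (redComul K H x))))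
      simp only [LinearMap.coe_comp, Function.comp_apply, LinearEquiv.coe_coe] at e2
      rw [e2]
      have e3 := LinearMap.congr_fun assoc_nat
        ((LinearMap.rTensor H (redComul K H)) (redComul K H x))
      simp only [LinearMap.coe_comp, Function.comp_apply, LinearEquiv.coe_coe] at e3
      rw [e3]
      have e4 := LinearMap.congr_fun (redComul_coassoc K H) x
      simp only [LinearMap.coe_comp, Function.comp_apply, LinearEquiv.coe_coe] at e4
      rw [e4]
      have e5 := LinearMap.congr_fun
        (congrArg (LinearMap.lTensor H) (ih)).symm (redComul K H x)
      simp only [LinearMap.lTensor_comp, LinearMap.coe_comp, Function.comp_apply] at e5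
      rw [← e5]

/-- For all `m, n ≥ 0`, the composite `(μ₃ ⊗ id) ∘ (R^m ⊗ R^n) ∘ Δ'`
equals `-R^{m+n+1}`, where `R^n = (-1)ⁿ (μ_n ⊗ id) ∘ Δ^(n)` are the components of
the preparation map. -/
theorem preparation_components_recursion
    [GradedAlgebra 𝒜] (hconn : 𝒜 0 = 1) (hgr : ComulGraded K H 𝒜) (m n : ℕ) :
    mu3TensorId K H ∘ₗ (TensorProduct.map (Rn K H m) (Rn K H n)) ∘ₗ redComul K H =
      -(Rn K H (m + n + 1)) := by
  have hk := key K H m n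
  simp only [Rn] at *
  rw [← hk]
  simp only [TensorProduct.map_smul_left, TensorProduct.map_smul_right, smul_smul,
    LinearMap.comp_smul, LinearMap.smul_comp, ← neg_smul]
  have hs : ((-1:K)^n * (-1)^m) = -((-1:K)^(m+n+1)) := by
    rw [pow_succ, ← pow_add]; ring
  rw [hs]
  module
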